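/- Let a : Fin N → ℝ be a cyclic orthonormal generator in ℝ^N and let θ : Fin N → ℝ satisfy cos θ_n = C_n and sin θ_n = S_n for every n ∈ Fin N. Then for every k ∈ Fin N, a_k = (√2/N) · ∑_{n ∈ Fin N} cos((2πn/N)·k + θ_n). -/

import Mathlib

open Real

lemma sum_exp_fin (N : ℕ) (hN : N ≠ 0) (m : ℤ) :
    ∑ n : Fin N, Complex.exp (2 * π * Complex.I * m * n / N) =
      if (N : ℤ) ∣ m then (N : ℂ) else 0 := by
  have hN' : (N : ℂ) ≠ 0 := Nat.cast_ne_zero.mpr hN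
  have key : ∀ n : Fin N, Complex.exp (2 * π * Complex.I * m * n / N)
      = Complex.exp (2 * π * Complex.I * m / N) ^ (n : ℕ) := by
    intro n
    rw [← Complex.exp_nat_mul]
    ring_nf
  rw [Finset.sum_congr rfl (fun n _ => key n), Fin.sum_univ_eq_sum_range]
  by_cases h : (N : ℤ) ∣ m
  · obtain ⟨c, rfl⟩ := h
    have h1 : Complex.exp (2 * π * Complex.I * ((N : ℤ) * c) / N) = 1 := by
      have h2 : (2 * π * Complex.I * ((N : ℤ) * c) / N : ℂ) = (c : ℤ) * (2 * π * Complex.I) := by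
        push_cast
        field_simp
      rw [h2, Complex.exp_int_mul_two_pi_mul_I]
    push_cast at h1
    simp [h1]
  · have hπ : (π : ℂ) ≠ 0 := Complex.ofReal_ne_zero.mpr Real.pi_ne_zero
    have hI : Complex.I ≠ 0 := Complex.I_ne_zero
    have hz : Complex.exp (2 * π * Complex.I * m / N) ≠ 1 := by
      intro hz
      rw [Complex.exp_eq_one_iff] at hz
      obtain ⟨c, hc⟩ := hz
      apply h
      have : (m : ℂ) = (c : ℂ) * N := by
        field_simp at hc
        have h3 : 2 * (π:ℂ) * Complex.I * (m:ℂ)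
            = 2 * (π:ℂ) * Complex.I * ((c:ℂ) * N) := by linear_combination (2 * (π:ℂ) * Complex.I) * hc
        exact mul_left_cancel₀ (mul_ne_zero (mul_ne_zero two_ne_zero hπ) hI) h3
      have : m = c * N := by exact_mod_cast this
      exact ⟨c, by rw [this, mul_comm]⟩
    rw [geom_sum_eq hz]
    have hN1 : Complex.exp (2 * π * Complex.I * m / N) ^ N = 1 := by
      rw [← Complex.exp_nat_mul]
      have h2 : (N : ℂ) * (2 * π * Complex.I * m / N) = (m : ℤ) * (2 * π * Complex.I) := by
        push_cast
        field_simp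
      rw [h2, Complex.exp_int_mul_two_pi_mul_I]
    simp [hN1, h]

lemma sum_cos_fin (N : ℕ) (hN : N ≠ 0) (m : ℤ) (φ : ℝ) :
    ∑ n : Fin N, Real.cos (2 * π * m * n / N + φ) =
      if (N : ℤ) ∣ m then (N : ℝ) * Real.cos φ else 0 := by
  have h1 : ∀ n : Fin N, Real.cos (2 * π * m * n / N + φ)
      = (Complex.exp ((φ : ℂ) * Complex.I) * Complex.exp (2 * π * Complex.I * m * n / N)).re := by
    intro n
    rw [← Complex.exp_add]
    have h2 : (φ : ℂ) * Complex.I + 2 * π * Complex.I * m * n / N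
        = ((2 * π * m * n / N + φ : ℝ) : ℂ) * Complex.I := by
      push_cast
      ring
    rw [h2, Complex.exp_ofReal_mul_I_re]
  rw [Finset.sum_congr rfl (fun n _ => h1 n), ← Complex.re_sum, ← Finset.mul_sum,
    sum_exp_fin N hN m]
  by_cases h : (N : ℤ) ∣ m
  · simp [h, Complex.exp_mul_I, Complex.add_re, Complex.mul_re, Complex.cos_ofReal_re]
    ring
  · simp [h]

theorem cog_canonical_form (N : ℕ) (hN : 2 ≤ N) [NeZero N] (a : Fin N → ℝ)
    (ha : ∀ s : Fin N, (∑ j : Fin N, a j * a (j + s)) = if s = 0 then 1 else 0)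
    (θ : Fin N → ℝ)
    (hcos : ∀ n : Fin N, Real.cos (θ n) =
      ∑ j : Fin N, a j * Real.cos (π / 4 - (2 * π * (n : ℕ) / N) * (j : ℕ)))
    (hsin : ∀ n : Fin N, Real.sin (θ n) =
      ∑ j : Fin N, a j * Real.sin (π / 4 - (2 * π * (n : ℕ) / N) * (j : ℕ))) :
    ∀ k : Fin N,
      a k = (Real.sqrt 2 / N) *
        ∑ n : Fin N, Real.cos ((2 * π * (n : ℕ) / N) * (k : ℕ) + θ n) := by
  intro k
  have hN0 : N ≠ 0 := by omega
  have hNR : (N : ℝ) ≠ 0 := Nat.cast_ne_zero.mpr hN0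
  have step : ∀ n : Fin N, Real.cos ((2 * π * (n : ℕ) / N) * (k : ℕ) + θ n)
      = ∑ j : Fin N, a j * Real.cos (2 * π * (((k : ℤ) - (j : ℤ) : ℤ) : ℝ) * n / N + π / 4) := by
    intro n
    rw [Real.cos_add, hcos, hsin, Finset.mul_sum, Finset.mul_sum, ← Finset.sum_sub_distrib]
    refine Finset.sum_congr rfl (fun j _ => ?_)
    rw [show (2 * π * (((k : ℤ) - (j : ℤ) : ℤ) : ℝ) * n / N + π / 4 : ℝ)
        = (2 * π * (n : ℕ) / N) * (k : ℕ) + (π / 4 - (2 * π * (n : ℕ) / N) * (j : ℕ)) by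
      push_cast; ring, Real.cos_add]
    ring
  rw [Finset.sum_congr rfl (fun n _ => step n), Finset.sum_comm]
  have step2 : ∀ j : Fin N, (∑ n : Fin N, a j * Real.cos (2 * π * (((k : ℤ) - (j : ℤ) : ℤ) : ℝ) * n / N + π / 4))
      = if j = k then a k * (N * Real.cos (π / 4)) else 0 := by
    intro j
    rw [← Finset.mul_sum, sum_cos_fin N hN0 ((k : ℤ) - (j : ℤ)) (π / 4)]
    by_cases hj : j = k
    · subst hj
      simp
    · have : ¬ (N : ℤ) ∣ ((k : ℤ) - (j : ℤ)) := by
        intro hd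
        apply hj
        have hk := k.isLt
        have hj' := j.isLt
        have h0 : (k : ℤ) - (j : ℤ) = 0 := by
          apply Int.eq_zero_of_dvd_of_natAbs_lt_natAbs hd
          rw [Int.natAbs_natCast]
          omega
        exact (Fin.ext (by omega)).symm
      rw [if_neg this, mul_zero, if_neg hj]
  rw [Finset.sum_congr rfl (fun j _ => step2 j), Finset.sum_ite_eq' Finset.univ k
    (fun _ => a k * (N * Real.cos (π / 4)))]
  simp [Real.cos_pi_div_four]
  field_simp
  have h2 : Real.sqrt 2 * Real.sqrt 2 = 2 := Real.mul_self_sqrt (by norm_num)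
  linear_combination (-(a k)) * h2
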